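/- arXiv:1511.06034 — 7 statements merged into one kernel-verified Lean document; each statement's English description precedes it below -/
import Mathlib

section
/- Let r ≥ 2 and m ≥ 1 be integers and let C be the binary code of length (r+1)^m with parity-check matrix H (equivalently, the code equivalent to the direct product of m copies of the [r+1,r] single-parity-check code). Then C is an (n,k,r,t)-exact locally repairable code with t = 2^m - 1: for every subset E ⊆ Z_{r+1}^m with 1 ≤ |E| ≤ 2^m - 1, writing s = |E|, there exists an enumeration α_1, …, α_s of the elements of E and, for each ℓ ∈ {1,…,s}, a set R_ℓ ⊆ (Z_{r+1}^m \ E) ∪ {α_1, …, α_{ℓ-1}} with |R_ℓ| ≤ r and coefficients a_β ∈ F_2 (β ∈ R_ℓ) such that x_{α_ℓ} = ∑_{β ∈ R_ℓ} a_β x_β for every codeword x ∈ C. -/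
/-- `Z_r^m ⊆ Z_{r+1}^m`: the tuples all of whose entries are `< r`;
`Lset r m α` is the set `L(α) = {μ ∈ Z_r^m : μ_j = α_j for all j ∈ T(α)}`,
where `T(α) = {j : α_j ≤ r-1}`. -/
def Lset (r m : ℕ) (α : Fin m → Fin (r + 1)) : Finset (Fin m → Fin (r + 1)) :=
  Finset.univ.filter fun μ =>
    (∀ j, (μ j : ℕ) < r) ∧ ∀ j, (α j : ℕ) < r → μ j = α j

/-- The binary code `C` with parity-check matrix `H`: all vectors
`x ∈ F_2^{Z_{r+1}^m}` with `x_α = ∑_{β ∈ L(α)} x_β` for every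
`α ∈ Z_{r+1}^m \ Z_r^m`. -/
def codeC (r m : ℕ) : Set ((Fin m → Fin (r + 1)) → ZMod 2) :=
  {x | ∀ α : Fin m → Fin (r + 1), ¬(∀ j, (α j : ℕ) < r) →
    x α = ∑ β ∈ Lset r m α, x β}



lemma Lset_self {r m : ℕ} {γ : Fin m → Fin (r + 1)} (h : ∀ j, (γ j : ℕ) < r) :
    Lset r m γ = {γ} := by
  ext μ
  simp only [Lset, Finset.mem_filter, Finset.mem_univ, true_and, Finset.mem_singleton]
  constructor
  · rintro ⟨-, h2⟩
    exact funext fun j => h2 j (h j)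
  · rintro rfl
    exact ⟨h, fun j _ => rfl⟩

lemma sumL {r m : ℕ} {x : (Fin m → Fin (r + 1)) → ZMod 2} (hx : x ∈ codeC r m)
    (γ : Fin m → Fin (r + 1)) : x γ = ∑ β ∈ Lset r m γ, x β := by
  by_cases h : ∀ j, (γ j : ℕ) < r
  · rw [Lset_self h, Finset.sum_singleton]
  · exact hx γ h

lemma keyrel {r m : ℕ} {x : (Fin m → Fin (r + 1)) → ZMod 2} (hx : x ∈ codeC r m)
    (α : Fin m → Fin (r + 1)) (j : Fin m) :
    x (Function.update α j (Fin.last r)) =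
      ∑ c : Fin r, x (Function.update α j c.castSucc) := by
  have hpart : Lset r m (Function.update α j (Fin.last r)) =
      Finset.univ.biUnion (fun c : Fin r => Lset r m (Function.update α j c.castSucc)) := by
    ext μ
    simp only [Lset, Finset.mem_filter, Finset.mem_univ, true_and, Finset.mem_biUnion]
    constructor
    · rintro ⟨h1, h2⟩
      refine ⟨⟨(μ j : ℕ), h1 j⟩, h1, fun k hk => ?_⟩
      rcases eq_or_ne k j with rfl | hkj
      · simp [Function.update_self]
      · rw [Function.update_of_ne hkj] at hk ⊢
        have := h2 k (by rwa [Function.update_of_ne hkj])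
        rwa [Function.update_of_ne hkj] at this
    · rintro ⟨c, h1, h2⟩
      refine ⟨h1, fun k hk => ?_⟩
      rcases eq_or_ne k j with rfl | hkj
      · rw [Function.update_self] at hk
        simp at hk
      · rw [Function.update_of_ne hkj] at hk ⊢
        have := h2 k (by rwa [Function.update_of_ne hkj])
        rwa [Function.update_of_ne hkj] at this
  have hdisj : ∀ c1 ∈ (Finset.univ : Finset (Fin r)), ∀ c2 ∈ Finset.univ, c1 ≠ c2 →
      Disjoint (Lset r m (Function.update α j c1.castSucc))
        (Lset r m (Function.update α j c2.castSucc)) := by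
    intro c1 _ c2 _ hne
    rw [Finset.disjoint_left]
    intro μ h1 h2
    simp only [Lset, Finset.mem_filter, Finset.mem_univ, true_and] at h1 h2
    have e1 := h1.2 j (by simp [Function.update_self])
    have e2 := h2.2 j (by simp [Function.update_self])
    rw [Function.update_self] at e1 e2
    exact hne (Fin.castSucc_injective r (e1 ▸ e2))
  rw [sumL hx, hpart, Finset.sum_biUnion hdisj]
  exact Finset.sum_congr rfl fun c _ => (sumL hx _).symm

lemma lineSum {r m : ℕ} {x : (Fin m → Fin (r + 1)) → ZMod 2} (hx : x ∈ codeC r m)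
    (α : Fin m → Fin (r + 1)) (j : Fin m) :
    ∑ c : Fin (r + 1), x (Function.update α j c) = 0 := by
  rw [Fin.sum_univ_castSucc, ← keyrel hx α j, CharTwo.add_self_eq_zero]

lemma repair {r m : ℕ} {x : (Fin m → Fin (r + 1)) → ZMod 2} (hx : x ∈ codeC r m)
    (α : Fin m → Fin (r + 1)) (j : Fin m) :
    x α = ∑ c ∈ Finset.univ.erase (α j), x (Function.update α j c) := by
  have h := lineSum hx α j
  rw [← Finset.add_sum_erase _ _ (Finset.mem_univ (α j)), Function.update_eq_self,
    add_eq_zero_iff_eq_neg, CharTwo.neg_eq] at h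
  exact h



lemma comb (r : ℕ) : ∀ m (S : Finset (Fin m → Fin (r + 1))), S.Nonempty →
    (∀ α ∈ S, ∀ j, ∃ β ∈ S, β ≠ α ∧ ∀ k, k ≠ j → β k = α k) → 2 ^ m ≤ S.card := by
  intro m
  induction m with
  | zero => intro S hS _; simpa [Finset.card_pos] using hS
  | succ m ih =>
    intro S hS hbad
    obtain ⟨β0, hβ0⟩ := hS
    obtain ⟨γ, hγS, hγne, hγag⟩ := hbad β0 hβ0 (Fin.last m)
    have hcne : γ (Fin.last m) ≠ β0 (Fin.last m) := by
      intro h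
      apply hγne
      funext k
      rcases eq_or_ne k (Fin.last m) with rfl | hk
      · exact h
      · exact hγag k hk
    -- the slices
    set Sc : Fin (r+1) → Finset (Fin (m+1) → Fin (r+1)) :=
      fun c => S.filter (fun β => β (Fin.last m) = c) with hSc
    have hproj : ∀ c, (Sc c).Nonempty → 2 ^ m ≤ (Sc c).card := by
      intro c hne
      have hinj : Set.InjOn (fun β : Fin (m+1) → Fin (r+1) => β ∘ Fin.castSucc) ((Sc c) : Set (Fin (m+1) → Fin (r+1))) := by
        intro β1 h1 β2 h2 heq
        simp only [hSc, Finset.mem_coe, Finset.mem_filter] at h1 h2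
        funext k
        induction k using Fin.lastCases with
        | last => exact h1.2.trans h2.2.symm
        | cast i => exact congrFun heq i
      have hcard : ((Sc c).image (fun β => β ∘ Fin.castSucc)).card = (Sc c).card :=
        Finset.card_image_of_injOn hinj
      rw [← hcard]
      apply ih
      · exact (Finset.image_nonempty).2 hne
      · intro α' hα' j
        obtain ⟨β, hβ, rfl⟩ := Finset.mem_image.1 hα'
        simp only [hSc, Finset.mem_filter] at hβ
        obtain ⟨δ, hδS, hδne, hδag⟩ := hbad β hβ.1 j.castSucc
        have hδlast : δ (Fin.last m) = c := by
          rw [hδag (Fin.last m) (Fin.castSucc_lt_last j).ne', hβ.2]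
        refine ⟨δ ∘ Fin.castSucc, Finset.mem_image.2 ⟨δ, ?_, rfl⟩, ?_, ?_⟩
        · simp only [hSc, Finset.mem_filter]; exact ⟨hδS, hδlast⟩
        · intro h
          apply hδne
          funext k
          induction k using Fin.lastCases with
          | last => rw [hδlast, hβ.2]
          | cast i => exact congrFun h i
        · intro k hk
          exact hδag k.castSucc (by simpa using hk)
    have h1 : 2 ^ m ≤ (Sc (β0 (Fin.last m))).card := by
      apply hproj
      exact ⟨β0, by simp [hSc, hβ0]⟩
    have h2 : 2 ^ m ≤ (Sc (γ (Fin.last m))).card := by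
      apply hproj
      exact ⟨γ, by simp [hSc, hγS]⟩
    have hdisj : Disjoint (Sc (β0 (Fin.last m))) (Sc (γ (Fin.last m))) := by
      rw [Finset.disjoint_left]
      intro β hb hg
      simp only [hSc, Finset.mem_filter] at hb hg
      exact hcne (hg.2 ▸ hb.2)
    have hsub : Sc (β0 (Fin.last m)) ∪ Sc (γ (Fin.last m)) ⊆ S := by
      intro β hβ
      rcases Finset.mem_union.1 hβ with h | h <;>
        exact (Finset.mem_filter.1 h).1
    calc 2 ^ (m + 1) = 2 ^ m + 2 ^ m := by ring
    _ ≤ (Sc (β0 (Fin.last m))).card + (Sc (γ (Fin.last m))).card := by omega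
    _ = (Sc (β0 (Fin.last m)) ∪ Sc (γ (Fin.last m))).card :=
        (Finset.card_union_of_disjoint hdisj).symm
    _ ≤ S.card := Finset.card_le_card hsub

lemma exists_good (r m : ℕ) (S : Finset (Fin m → Fin (r + 1))) (hS : S.Nonempty)
    (hcard : S.card < 2 ^ m) :
    ∃ α ∈ S, ∃ j : Fin m, ∀ c : Fin (r + 1), c ≠ α j → Function.update α j c ∉ S := by
  by_contra h
  push_neg at h
  refine absurd (comb r m S hS ?_) (by omega)
  intro α hα j
  obtain ⟨c, hc, hcS⟩ := h α hα j
  refine ⟨Function.update α j c, hcS, ?_, ?_⟩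
  · intro he
    exact hc (by rw [← he, Function.update_self])
  · intro k hk
    exact Function.update_of_ne hk _ _

lemma main_aux (r m : ℕ) :
    ∀ n (E : Finset (Fin m → Fin (r + 1))), E.card = n → E.card ≤ 2 ^ m - 1 →
    ∃ e : Fin E.card → (Fin m → Fin (r + 1)),
      Function.Injective e ∧ (∀ ℓ, e ℓ ∈ E) ∧
      ∀ ℓ : Fin E.card, ∃ R : Finset (Fin m → Fin (r + 1)),
        (∀ β ∈ R, β ∉ E ∨ ∃ ℓ' : Fin E.card, ℓ' < ℓ ∧ e ℓ' = β) ∧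
        e ℓ ∉ R ∧ R.card ≤ r ∧
        ∃ a : (Fin m → Fin (r + 1)) → ZMod 2,
          ∀ x ∈ codeC r m, x (e ℓ) = ∑ β ∈ R, a β * x β := by
  intro n
  induction n with
  | zero =>
    intro E h0 _
    refine ⟨fun ℓ => absurd ℓ.isLt (by omega), ?_, ?_, ?_⟩ <;>
      intro ℓ <;> exact absurd ℓ.isLt (by omega)
  | succ n ih =>
    intro E hcard hle
    have hpow : 1 ≤ 2 ^ m := Nat.one_le_two_pow
    have hne : E.Nonempty := Finset.card_pos.1 (by omega)
    obtain ⟨α, hαE, j, hαj⟩ := exists_good r m E hne (by omega)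
    set E' := E.erase α with hE'
    have hc' : E'.card = n := by
      rw [hE', Finset.card_erase_of_mem hαE, hcard]
      omega
    obtain ⟨e', hinj', hmem', hrep'⟩ := ih E' hc'
      (le_trans (by rw [hc']; omega) hle)
    have hEcard : E.card = n + 1 := hcard
    -- the enumeration
    have hval : ∀ ℓ : Fin E.card, (ℓ : ℕ) ≠ 0 → (ℓ : ℕ) - 1 < E'.card := by
      intro ℓ hℓ
      have := ℓ.isLt
      omega
    obtain ⟨e, he⟩ : ∃ e : Fin E.card → (Fin m → Fin (r + 1)),
        ∀ ℓ, e ℓ = if hℓ : (ℓ : ℕ) = 0 then α else e' ⟨(ℓ : ℕ) - 1, hval ℓ hℓ⟩ :=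
      ⟨_, fun ℓ => rfl⟩
    refine ⟨e, ?_, ?_, ?_⟩
    · -- injective
      intro ℓ1 ℓ2 h
      rw [he ℓ1, he ℓ2] at h
      by_cases h1 : (ℓ1 : ℕ) = 0 <;> by_cases h2 : (ℓ2 : ℕ) = 0
      · exact Fin.ext (by omega)
      · rw [dif_pos h1, dif_neg h2] at h
        exact absurd h.symm (Finset.ne_of_mem_erase (hmem' _))
      · rw [dif_neg h1, dif_pos h2] at h
        exact absurd h (Finset.ne_of_mem_erase (hmem' _))
      · rw [dif_neg h1, dif_neg h2] at h
        have := hinj' h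
        rw [Fin.mk.injEq] at this
        exact Fin.ext (by omega)
    · -- membership
      intro ℓ
      rw [he ℓ]
      by_cases hℓ : (ℓ : ℕ) = 0
      · rw [dif_pos hℓ]; exact hαE
      · rw [dif_neg hℓ]; exact Finset.mem_of_mem_erase (hmem' _)
    · -- repair
      intro ℓ
      by_cases hℓ : (ℓ : ℕ) = 0
      · -- repair α from its line
        refine ⟨(Finset.univ.erase (α j)).image (fun c => Function.update α j c),
          ?_, ?_, ?_, 1, ?_⟩
        · intro β hβ
          obtain ⟨c, hc, rfl⟩ := Finset.mem_image.1 hβ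
          exact Or.inl (hαj c (Finset.ne_of_mem_erase hc))
        · rw [he ℓ, dif_pos hℓ]
          intro hα
          obtain ⟨c, hc, hcα⟩ := Finset.mem_image.1 hα
          exact Finset.ne_of_mem_erase hc (by rw [← hcα, Function.update_self])
        · refine le_trans Finset.card_image_le ?_
          rw [Finset.card_erase_of_mem (Finset.mem_univ _), Finset.card_univ,
            Fintype.card_fin]
          omega
        · intro x hx
          rw [he ℓ, dif_pos hℓ]
          rw [Finset.sum_image (fun c1 _ c2 _ h => by
            have := congrFun h j
            rwa [Function.update_self, Function.update_self] at this)]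
          simpa [one_mul] using repair hx α j
      · -- repair via e'
        obtain ⟨R, hR1, hR2, hR3, a, ha⟩ := hrep' ⟨(ℓ : ℕ) - 1, hval ℓ hℓ⟩
        refine ⟨R, ?_, ?_, hR3, a, ?_⟩
        · intro β hβ
          rcases hR1 β hβ with hβE' | ⟨ℓ', hℓ', heℓ'⟩
          · by_cases hβα : β = α
            · refine Or.inr ⟨⟨0, by omega⟩, ?_, ?_⟩
              · rw [Fin.lt_def]; simpa using Nat.pos_of_ne_zero hℓ
              · rw [he, dif_pos rfl]; exact hβα.symm
            · exact Or.inl fun hβE => hβE' (Finset.mem_erase.2 ⟨hβα, hβE⟩)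
          · refine Or.inr ⟨⟨(ℓ' : ℕ) + 1, by have := ℓ'.isLt; omega⟩, ?_, ?_⟩
            · rw [Fin.lt_def] at hℓ' ⊢
              simp only [] at hℓ' ⊢
              omega
            · rw [he, dif_neg (by simp), ← heℓ']
              exact congrArg e' (Fin.ext (by simp))
        · rw [he ℓ, dif_neg hℓ]; exact hR2
        · intro x hx
          rw [he ℓ, dif_neg hℓ]
          exact ha x hx

/-- The code `C` is an `(n, k, r, t)`-ELRC with `t = 2^m - 1`: every erasure
pattern `E` with `1 ≤ |E| ≤ 2^m - 1` can be sequentially repaired, each lost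
symbol from at most `r` symbols that are live or already repaired. -/
theorem codeC_is_ELRC (r m : ℕ) (hr : 2 ≤ r) (hm : 1 ≤ m)
    (E : Finset (Fin m → Fin (r + 1))) (h1 : 1 ≤ E.card) (h2 : E.card ≤ 2 ^ m - 1) :
    ∃ e : Fin E.card → (Fin m → Fin (r + 1)),
      Function.Injective e ∧ (∀ ℓ, e ℓ ∈ E) ∧
      ∀ ℓ : Fin E.card, ∃ R : Finset (Fin m → Fin (r + 1)),
        (∀ β ∈ R, β ∉ E ∨ ∃ ℓ' : Fin E.card, ℓ' < ℓ ∧ e ℓ' = β) ∧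
        e ℓ ∉ R ∧ R.card ≤ r ∧
        ∃ a : (Fin m → Fin (r + 1)) → ZMod 2,
          ∀ x ∈ codeC r m, x (e ℓ) = ∑ β ∈ R, a β * x β := by
  exact main_aux r m E.card E rfl h2
end

section
/- Let r ≥ 2 and m ≥ 1 be integers. For every subset E ⊆ Z_{r+1}^m with 1 ≤ |E| ≤ 2^m - 1, there exist an index i ∈ {1,…,m} and an element α ∈ E such that every β ∈ Z_{r+1}^m with β ≠ α and β_j = α_j for all j ≠ i satisfies β ∉ E (that is, the axis-parallel line through α in direction i meets E only in α). -/
lemma aux_pow_le_card (r : ℕ) : ∀ m (E : Finset (Fin m → Fin (r + 1))),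
    E.Nonempty →
    (∀ α ∈ E, ∀ i : Fin m, ∃ β ∈ E, β ≠ α ∧ ∀ j, j ≠ i → β j = α j) →
    2 ^ m ≤ E.card := by
  intro m
  induction m with
  | zero =>
    intro E hne _
    simpa using Finset.card_pos.mpr hne
  | succ m ih =>
    intro E hne hcl
    -- sections of E by the value of the first coordinate
    set S : Fin (r + 1) → Finset (Fin (m + 1) → Fin (r + 1)) :=
      fun c => E.filter (fun f => f 0 = c) with hS
    have hcard : E.card = ∑ c : Fin (r + 1), (S c).card := by
      exact Finset.card_eq_sum_card_fiberwise (fun x _ => Finset.mem_univ (x 0))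
    -- each nonempty section has card ≥ 2^m
    have hsec : ∀ c, (S c).Nonempty → 2 ^ m ≤ (S c).card := by
      intro c hcne
      set T : Finset (Fin m → Fin (r + 1)) := (S c).image (fun f => f ∘ Fin.succ) with hT
      have hTcard : T.card = (S c).card := by
        apply Finset.card_image_of_injOn
        intro f hf g hg hfg
        simp only [hS, Finset.mem_coe, Finset.mem_filter] at hf hg
        funext j
        refine Fin.cases ?_ ?_ j
        · rw [hf.2, hg.2]
        · intro k
          exact congrFun hfg k
      have hTne : T.Nonempty := hcne.image _
      have hTcl : ∀ α ∈ T, ∀ i : Fin m, ∃ β ∈ T, β ≠ α ∧ ∀ j, j ≠ i → β j = α j := by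
        intro α hα i
        obtain ⟨f, hf, rfl⟩ := Finset.mem_image.mp hα
        simp only [hS, Finset.mem_filter] at hf
        obtain ⟨β, hβE, hβne, hβeq⟩ := hcl f hf.1 i.succ
        have hβ0 : β 0 = c := by
          rw [hβeq 0 (by simp [Fin.succ_ne_zero, Ne, eq_comm]), hf.2]
        refine ⟨β ∘ Fin.succ, Finset.mem_image.mpr ⟨β, by simp [hS, Finset.mem_filter, hβE, hβ0], rfl⟩, ?_, ?_⟩
        · intro hcon
          apply hβne
          funext j
          refine Fin.cases ?_ ?_ j
          · rw [hβ0, hf.2]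
          · intro k; exact congrFun hcon k
        · intro j hj
          exact hβeq j.succ (fun h => hj (Fin.succ_injective _ h))
      have := ih T hTne hTcl
      omega
    -- at least two sections are nonempty
    obtain ⟨α, hα⟩ := hne
    obtain ⟨β, hβE, hβne, hβeq⟩ := hcl α hα 0
    have hc12 : β 0 ≠ α 0 := by
      intro h
      apply hβne
      funext j
      by_cases hj : j = 0
      · subst hj; exact h
      · exact hβeq j hj
    have h1 : α ∈ S (α 0) := Finset.mem_filter.mpr ⟨hα, rfl⟩
    have h2 : β ∈ S (β 0) := Finset.mem_filter.mpr ⟨hβE, rfl⟩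
    have hb1 : 2 ^ m ≤ (S (α 0)).card := hsec _ ⟨α, h1⟩
    have hb2 : 2 ^ m ≤ (S (β 0)).card := hsec _ ⟨β, h2⟩
    have hsum : (S (α 0)).card + (S (β 0)).card ≤ ∑ c : Fin (r + 1), (S c).card := by
      have : ∑ c ∈ ({α 0, β 0} : Finset (Fin (r + 1))), (S c).card ≤
          ∑ c : Fin (r + 1), (S c).card :=
        Finset.sum_le_sum_of_subset (Finset.subset_univ _)
      rwa [Finset.sum_pair (Ne.symm hc12)] at this
    have : 2 ^ (m + 1) ≤ ∑ c : Fin (r + 1), (S c).card := by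
      calc 2 ^ (m + 1) = 2 ^ m + 2 ^ m := by ring
        _ ≤ (S (α 0)).card + (S (β 0)).card := Nat.add_le_add hb1 hb2
        _ ≤ _ := hsum
    omega

/-- For every nonempty `E ⊆ Z_{r+1}^m` with `|E| ≤ 2^m - 1` there are a
direction `i` and a point `α ∈ E` such that the axis-parallel line through `α`
in direction `i` meets `E` only in `α`. -/
theorem exists_line_meeting_only_once (r m : ℕ) (hr : 2 ≤ r) (hm : 1 ≤ m)
    (E : Finset (Fin m → Fin (r + 1))) (h1 : 1 ≤ E.card) (h2 : E.card ≤ 2 ^ m - 1) :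
    ∃ i : Fin m, ∃ α ∈ E, ∀ β : Fin m → Fin (r + 1),
      β ≠ α → (∀ j, j ≠ i → β j = α j) → β ∉ E := by
  by_contra hcon
  push_neg at hcon
  have hcl : ∀ α ∈ E, ∀ i : Fin m, ∃ β ∈ E, β ≠ α ∧ ∀ j, j ≠ i → β j = α j := by
    intro α hα i
    obtain ⟨β, hβne, hβeq, hβE⟩ := hcon i α hα
    exact ⟨β, hβE, hβne, hβeq⟩
  have := aux_pow_le_card r m E (Finset.card_pos.mp h1) hcl
  have hpow : 1 ≤ 2 ^ m := Nat.one_le_two_pow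
  omega
end

section
/- Let r ≥ 2 and m ≥ 1 be integers and let C be the binary code of length (r+1)^m defined by the parity-check matrix H. Then for every α ∈ Z_{r+1}^m and every i ∈ {1,…,m}, the set L^{(i)}_α \ {α} is a repair set of α; concretely, for every codeword x ∈ C, x_α = ∑_{β ∈ L^{(i)}_α, β ≠ α} x_β (equivalently, ∑_{λ=0}^{r} x_{α[i:=λ]} = 0 over F_2, where α[i:=λ] denotes α with its i-th entry replaced by λ). -/
/-- `lineSet r m i α` is the axis-parallel line `L^{(i)}_α` through `α` in
direction `i`. -/
def lineSet (r m : ℕ) (i : Fin m) (α : Fin m → Fin (r + 1)) :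
    Finset (Fin m → Fin (r + 1)) :=
  Finset.univ.filter fun μ => ∀ j, j ≠ i → μ j = α j

/-- For every `α` and every direction `i`, the punctured line
`L^{(i)}_α \ {α}` is a repair set of `α`: `x_α = ∑_{β ∈ L^{(i)}_α, β ≠ α} x_β`
for all codewords, equivalently `∑_{λ=0}^{r} x_{α[i:=λ]} = 0` over `F_2`. -/
theorem line_is_repair_set (r m : ℕ) (hr : 2 ≤ r) (hm : 1 ≤ m)
    (α : Fin m → Fin (r + 1)) (i : Fin m) :
    ∀ x ∈ codeC r m,
      x α = ∑ β ∈ (lineSet r m i α).erase α, x β ∧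
      ∑ l : Fin (r + 1), x (Function.update α i l) = 0 := by
  intro x hx
  -- Key expansion: for every β, x β equals the sum over L(β)
  have hA : ∀ β : Fin m → Fin (r + 1), x β = ∑ μ ∈ Lset r m β, x μ := by
    intro β
    by_cases h : ∀ j, (β j : ℕ) < r
    · have hL : Lset r m β = {β} := by
        ext μ
        simp only [Lset, Finset.mem_filter, Finset.mem_univ, true_and,
          Finset.mem_singleton]
        constructor
        · rintro ⟨h1, h2⟩
          funext j
          exact h2 j (h j)
        · rintro rfl
          exact ⟨h, fun j _ => rfl⟩
      rw [hL, Finset.sum_singleton]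
    · exact hx β h
  have hne_last : ∀ μ : Fin m → Fin (r + 1), (μ i : ℕ) < r → μ i ≠ Fin.last r := by
    intro μ h heq
    have : (μ i : ℕ) = r := by rw [heq]; simp [Fin.last]
    omega
  have key : ∑ l : Fin (r + 1), x (Function.update α i l) = 0 := by
    calc ∑ l : Fin (r + 1), x (Function.update α i l)
        = ∑ l : Fin (r + 1), ∑ μ ∈ Lset r m (Function.update α i l), x μ :=
          Finset.sum_congr rfl fun l _ => hA _
      _ = ∑ l : Fin (r + 1), ∑ μ : Fin m → Fin (r + 1),
            if μ ∈ Lset r m (Function.update α i l) then x μ else 0 := by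
          refine Finset.sum_congr rfl fun l _ => ?_
          rw [Finset.sum_ite_mem, Finset.univ_inter]
      _ = ∑ μ : Fin m → Fin (r + 1), ∑ l : Fin (r + 1),
            if μ ∈ Lset r m (Function.update α i l) then x μ else 0 :=
          Finset.sum_comm
      _ = 0 := by
          refine Finset.sum_eq_zero fun μ _ => ?_
          by_cases hP : (∀ j, (μ j : ℕ) < r) ∧
              (∀ j, j ≠ i → (α j : ℕ) < r → μ j = α j)
          · have hlt : (μ i : ℕ) < r := hP.1 i
            have hne : μ i ≠ Fin.last r := hne_last μ hlt
            have hmem : ∀ l : Fin (r + 1),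
                μ ∈ Lset r m (Function.update α i l) ↔ (l = μ i ∨ l = Fin.last r) := by
              intro l
              simp only [Lset, Finset.mem_filter, Finset.mem_univ, true_and]
              constructor
              · rintro ⟨h1, h2⟩
                by_cases hl : (l : ℕ) < r
                · left
                  have := h2 i (by rw [Function.update_self]; exact hl)
                  rw [Function.update_self] at this
                  exact this.symm
                · right
                  have hlr : (l : ℕ) = r := by
                    have := l.isLt; omega
                  exact Fin.ext (by simp [Fin.last, hlr])
              · rintro (rfl | rfl)
                · refine ⟨hP.1, fun j hj => ?_⟩
                  by_cases hji : j = i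
                  · subst hji; rw [Function.update_self]
                  · rw [Function.update_of_ne hji] at hj ⊢
                    exact hP.2 j hji hj
                · refine ⟨hP.1, fun j hj => ?_⟩
                  by_cases hji : j = i
                  · subst hji
                    rw [Function.update_self] at hj
                    simp [Fin.last] at hj
                  · rw [Function.update_of_ne hji] at hj ⊢
                    exact hP.2 j hji hj
            have hsplit : ∀ l : Fin (r + 1),
                (if μ ∈ Lset r m (Function.update α i l) then x μ else 0) =
                (if l = μ i then x μ else 0) + (if l = Fin.last r then x μ else 0) := by
              intro l
              rcases eq_or_ne l (μ i) with rfl | h1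
              · rw [if_pos ((hmem _).2 (Or.inl rfl)), if_pos rfl, if_neg hne, add_zero]
              · rcases eq_or_ne l (Fin.last r) with rfl | h2
                · rw [if_pos ((hmem _).2 (Or.inr rfl)), if_neg h1, if_pos rfl, zero_add]
                · rw [if_neg (fun h => by rcases (hmem l).1 h with h | h <;> tauto),
                    if_neg h1, if_neg h2, add_zero]
            rw [Finset.sum_congr rfl fun l _ => hsplit l, Finset.sum_add_distrib,
              Finset.sum_ite_eq' Finset.univ (μ i) (fun _ => x μ),
              Finset.sum_ite_eq' Finset.univ (Fin.last r) (fun _ => x μ)]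
            simp [CharTwo.add_self_eq_zero]
          · refine Finset.sum_eq_zero fun l _ => ?_
            rw [if_neg]
            intro hmem
            simp only [Lset, Finset.mem_filter, Finset.mem_univ, true_and] at hmem
            refine hP ⟨hmem.1, fun j hj hjr => ?_⟩
            have := hmem.2 j (by rw [Function.update_of_ne hj]; exact hjr)
            rwa [Function.update_of_ne hj] at this
  refine ⟨?_, key⟩
  -- the line is the image of the update map
  have hline : lineSet r m i α = Finset.image (Function.update α i) Finset.univ := by
    ext μ
    simp only [lineSet, Finset.mem_filter, Finset.mem_univ, true_and,
      Finset.mem_image]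
    constructor
    · intro h
      refine ⟨μ i, funext fun j => ?_⟩
      by_cases hj : j = i
      · subst hj; rw [Function.update_self]
      · rw [Function.update_of_ne hj]; exact (h j hj).symm
    · rintro ⟨a, rfl⟩ j hj
      rw [Function.update_of_ne hj]
  have hinj : ∀ a ∈ (Finset.univ : Finset (Fin (r + 1))), ∀ b ∈ Finset.univ,
      Function.update α i a = Function.update α i b → a = b := by
    intro a _ b _ h
    have := congrFun h i
    rwa [Function.update_self, Function.update_self] at this
  have hsum : ∑ β ∈ lineSet r m i α, x β = 0 := by
    rw [hline, Finset.sum_image hinj]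
    exact key
  have hmemα : α ∈ lineSet r m i α := by
    simp [lineSet]
  have h := Finset.add_sum_erase _ x hmemα
  rw [hsum] at h
  rw [add_eq_zero_iff_eq_neg] at h
  rw [h, CharTwo.neg_eq]
end

section
/- Let F be a field, let C ⊆ F^n be a linear code, and let r, t be positive integers. Then C is (E,r)-repairable for every subset E ⊆ {1,…,n} with |E| ≤ t if and only if for every subset E ⊆ {1,…,n} with 1 ≤ |E| ≤ t there exists an index i ∈ E that has an (r,C)-repair set contained in {1,…,n} \ E. -/
/-- `R` is an `(r, C)`-repair set of the coordinate `i`: `i ∉ R`, `|R| ≤ r`,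
and there are coefficients `a_j`, independent of the codeword, with
`x_i = ∑_{j ∈ R} a_j x_j` for all `x ∈ C`. -/
def IsRepairSet {F : Type*} [Field F] {n : ℕ} (C : Submodule F (Fin n → F))
    (r : ℕ) (i : Fin n) (R : Finset (Fin n)) : Prop :=
  i ∉ R ∧ R.card ≤ r ∧ ∃ a : Fin n → F, ∀ x ∈ C, x i = ∑ j ∈ R, a j * x j

/-- `C` is `(E, r)`-repairable: the elements of `E` can be enumerated as
`i_1, …, i_s` so that each `i_ℓ` has an `(r, C)`-repair set contained in
`([n] \ E) ∪ {i_1, …, i_{ℓ-1}}`. -/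
def ERepairable {F : Type*} [Field F] {n : ℕ} (C : Submodule F (Fin n → F))
    (r : ℕ) (E : Finset (Fin n)) : Prop :=
  ∃ e : Fin E.card → Fin n, Function.Injective e ∧ (∀ ℓ, e ℓ ∈ E) ∧
    ∀ ℓ : Fin E.card, ∃ R : Finset (Fin n),
      (∀ j ∈ R, j ∉ E ∨ ∃ ℓ' : Fin E.card, ℓ' < ℓ ∧ e ℓ' = j) ∧
      IsRepairSet C r (e ℓ) R

/-- A linear code `C` is `(E, r)`-repairable for every `E` with `|E| ≤ t` iff
for every nonempty `E` with `|E| ≤ t` some `i ∈ E` has an `(r, C)`-repair set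
contained in the complement of `E`. -/
theorem eRepairable_iff_exists_repair_set_outside {F : Type*} [Field F] {n : ℕ}
    (C : Submodule F (Fin n → F)) (r t : ℕ) (hr : 0 < r) (ht : 0 < t) :
    (∀ E : Finset (Fin n), E.card ≤ t → ERepairable C r E) ↔
    (∀ E : Finset (Fin n), 0 < E.card → E.card ≤ t →
      ∃ i ∈ E, ∃ R : Finset (Fin n), (∀ j ∈ R, j ∉ E) ∧ IsRepairSet C r i R) := by
  constructor
  · intro h E hpos hle
    obtain ⟨e, hinj, hmem, hrep⟩ := h E hle
    refine ⟨e ⟨0, hpos⟩, hmem _, ?_⟩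
    obtain ⟨R, hR, hRrep⟩ := hrep ⟨0, hpos⟩
    refine ⟨R, fun j hj => ?_, hRrep⟩
    rcases hR j hj with h1 | ⟨ℓ', hℓ', _⟩
    · exact h1
    · exact absurd hℓ' (by simp [Fin.lt_def])
  · intro h
    suffices key : ∀ m, ∀ E : Finset (Fin n), E.card = m → E.card ≤ t → ERepairable C r E by
      intro E hE; exact key E.card E rfl hE
    intro m
    induction m with
    | zero =>
      intro E hE _
      exact ⟨fun ℓ => absurd ℓ.2 (by omega), fun ℓ => absurd ℓ.2 (by omega),
        fun ℓ => absurd ℓ.2 (by omega), fun ℓ => absurd ℓ.2 (by omega)⟩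
    | succ m ih =>
      intro E hE hle
      obtain ⟨i, hi, R0, hR0out, hR0⟩ := h E (by omega) hle
      set E' := E.erase i with hE'
      have hcard' : E'.card = m := by rw [hE', Finset.card_erase_of_mem hi, hE]; omega
      obtain ⟨e', hinj', hmem', hrep'⟩ := ih E' hcard' (by omega)
      have hne : ∀ ℓ, e' ℓ ≠ i := fun ℓ => Finset.ne_of_mem_erase (hmem' ℓ)
      have hcard : E.card = E'.card + 1 := by omega
      have hconsinj : Function.Injective (Fin.cons i e' : Fin (E'.card + 1) → Fin n) := by
        intro a b hab
        induction a using Fin.cases <;> induction b using Fin.cases <;>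
          simp only [Fin.cons_zero, Fin.cons_succ] at hab
        · rfl
        · exact absurd hab.symm (hne _)
        · exact absurd hab (hne _)
        · exact congrArg Fin.succ (hinj' hab)
      refine ⟨fun k => (Fin.cons i e' : Fin (E'.card + 1) → Fin n) (Fin.cast hcard k), ?_, fun k => ?_, fun ℓ => ?_⟩
      · intro a b hab
        exact Fin.cast_injective hcard (hconsinj hab)
      · rcases Fin.eq_zero_or_eq_succ (Fin.cast hcard k) with h0 | ⟨ℓ', hℓ'⟩
        · simp only [h0, Fin.cons_zero]; exact hi
        · simp only [hℓ', Fin.cons_succ]; exact Finset.mem_of_mem_erase (hmem' ℓ')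
      · rcases Fin.eq_zero_or_eq_succ (Fin.cast hcard ℓ) with h0 | ⟨ℓ', hℓ'⟩
        · refine ⟨R0, fun j hj => Or.inl (hR0out j hj), ?_⟩
          simp only [h0, Fin.cons_zero]
          exact hR0
        · obtain ⟨R', hR', hRrep'⟩ := hrep' ℓ'
          have hval : (ℓ : ℕ) = (ℓ' : ℕ) + 1 := by
            have := congrArg Fin.val hℓ'
            simpa using this
          refine ⟨R', fun j hj => ?_, ?_⟩
          · rcases hR' j hj with h1 | ⟨ℓ₂, hℓ₂, hej⟩
            · by_cases hji : j = i
              · refine Or.inr ⟨Fin.cast hcard.symm 0, ?_, ?_⟩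
                · simp [Fin.lt_def, hval]
                · subst hji
                  have : Fin.cast hcard (Fin.cast hcard.symm 0) = (0 : Fin (E'.card + 1)) :=
                    Fin.ext (by simp)
                  simp [this]
              · refine Or.inl fun hjE => h1 ?_
                exact Finset.mem_erase.mpr ⟨hji, hjE⟩
            · refine Or.inr ⟨Fin.cast hcard.symm ℓ₂.succ, ?_, ?_⟩
              · simp only [Fin.lt_def, Fin.coe_cast, Fin.val_succ, hval]
                exact Nat.succ_lt_succ hℓ₂
              · have : Fin.cast hcard (Fin.cast hcard.symm ℓ₂.succ) = ℓ₂.succ :=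
                  Fin.ext (by simp)
                simp [this, hej]
          · simp only [hℓ', Fin.cons_succ]
            exact hRrep'
end

section
/- Let r ≥ 2 and m ≥ 1 be integers and let C be the binary code of length (r+1)^m defined by the parity-check matrix H. Then the F_2-linear restriction map C → F_2^{Z_r^m} sending a codeword x = (x_β)_{β ∈ Z_{r+1}^m} to its restriction (x_β)_{β ∈ Z_r^m} is a bijection; consequently Z_r^m is an information set of C and C is an [n,k] linear code with n = (r+1)^m and k = r^m. -/
lemma mem_Lset {r m : ℕ} {α μ : Fin m → Fin (r + 1)} :
    μ ∈ Lset r m α ↔ (∀ j, (μ j : ℕ) < r) ∧ ∀ j, (α j : ℕ) < r → μ j = α j := by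
  simp [Lset]

lemma Lset_good {r m : ℕ} {α : Fin m → Fin (r + 1)} (hα : ∀ j, (α j : ℕ) < r) :
    Lset r m α = {α} := by
  ext μ
  simp only [mem_Lset, Finset.mem_singleton]
  constructor
  · rintro ⟨h1, h2⟩
    exact funext fun j => h2 j (hα j)
  · rintro rfl
    exact ⟨hα, fun j _ => rfl⟩

/-- Extension of a vector on `Z_r^m` to a codeword. -/
noncomputable def extC (r m : ℕ)
    (y : {μ : Fin m → Fin (r + 1) // ∀ j, (μ j : ℕ) < r} → ZMod 2) :
    (Fin m → Fin (r + 1)) → ZMod 2 :=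
  fun α => ∑ β ∈ Lset r m α,
    (if h : ∀ j, (β j : ℕ) < r then y ⟨β, h⟩ else 0)

lemma extC_good (r m : ℕ)
    (y : {μ : Fin m → Fin (r + 1) // ∀ j, (μ j : ℕ) < r} → ZMod 2)
    (α : Fin m → Fin (r + 1)) (hα : ∀ j, (α j : ℕ) < r) :
    extC r m y α = y ⟨α, hα⟩ := by
  unfold extC
  rw [Lset_good hα, Finset.sum_singleton, dif_pos hα]

lemma extC_mem (r m : ℕ)
    (y : {μ : Fin m → Fin (r + 1) // ∀ j, (μ j : ℕ) < r} → ZMod 2) :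
    extC r m y ∈ codeC r m := by
  intro α hα
  apply Finset.sum_congr rfl
  intro β hβ
  have hβ' := (mem_Lset.1 hβ).1
  rw [dif_pos hβ', extC_good r m y β hβ']

/-- The restriction map `C → F_2^{Z_r^m}` is a bijection; consequently
`Z_r^m` is an information set of `C`, and `C`, a binary code of length
`(r+1)^m`, has dimension `k = r^m`, i.e. `|C| = 2^(r^m)`. -/
theorem restriction_bijective (r m : ℕ) (hr : 2 ≤ r) (hm : 1 ≤ m) :
    Function.Bijective
      (fun x : codeC r m =>
        fun μ : {μ : Fin m → Fin (r + 1) // ∀ j, (μ j : ℕ) < r} =>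
          (x : (Fin m → Fin (r + 1)) → ZMod 2) μ.val) ∧
    Nat.card (codeC r m) = 2 ^ (r ^ m) := by
  have hbij : Function.Bijective
      (fun x : codeC r m =>
        fun μ : {μ : Fin m → Fin (r + 1) // ∀ j, (μ j : ℕ) < r} =>
          (x : (Fin m → Fin (r + 1)) → ZMod 2) μ.val) := by
    constructor
    · rintro ⟨x1, hx1⟩ ⟨x2, hx2⟩ h
      have h' : ∀ μ : {μ : Fin m → Fin (r + 1) // ∀ j, (μ j : ℕ) < r},
          x1 μ.val = x2 μ.val := fun μ => congrFun h μ
      ext α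
      show x1 α = x2 α
      by_cases hα : ∀ j, (α j : ℕ) < r
      · exact h' ⟨α, hα⟩
      · rw [hx1 α hα, hx2 α hα]
        apply Finset.sum_congr rfl
        intro β hβ
        exact h' ⟨β, (mem_Lset.1 hβ).1⟩
    · intro y
      refine ⟨⟨extC r m y, extC_mem r m y⟩, ?_⟩
      funext μ
      exact extC_good r m y μ.val μ.2
  refine ⟨hbij, ?_⟩
  have hcard := Nat.card_eq_of_bijective _ hbij
  rw [hcard]
  have e : {μ : Fin m → Fin (r + 1) // ∀ j, (μ j : ℕ) < r} ≃ (Fin m → Fin r) :=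
    { toFun := fun μ => fun j => ⟨(μ.1 j : ℕ), μ.2 j⟩
      invFun := fun ν => ⟨fun j => ⟨(ν j : ℕ), Nat.lt_succ_of_lt (ν j).2⟩,
        fun j => (ν j).2⟩
      left_inv := fun μ => by ext j; rfl
      right_inv := fun ν => by ext j; rfl }
  have h1 : Nat.card {μ : Fin m → Fin (r + 1) // ∀ j, (μ j : ℕ) < r} = r ^ m := by
    rw [Nat.card_congr e]
    simp [Nat.card_eq_fintype_card]
  rw [Nat.card_fun, h1]
  simp [Nat.card_eq_fintype_card]
end

section
/- Let r ≥ 2 and m ≥ 1 be integers. A vector x ∈ F_2^{Z_{r+1}^m} belongs to the code C defined by the parity-check matrix H if and only if for every i ∈ {1,…,m} and every α ∈ Z_{r+1}^m, ∑_{λ=0}^{r} x_{α[i:=λ]} = 0 over F_2, where α[i:=λ] denotes α with its i-th entry replaced by λ. In other words, C equals the direct product of m copies of the [r+1,r] single-parity-check code: the code of all m-dimensional arrays over F_2 whose sum along every axis-parallel line is zero. -/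
lemma Lset_of_lt {r m : ℕ} {α : Fin m → Fin (r + 1)} (h : ∀ j, (α j : ℕ) < r) :
    Lset r m α = {α} := by
  ext μ
  simp only [mem_Lset, Finset.mem_singleton]
  constructor
  · rintro ⟨_, h2⟩; funext j; exact h2 j (h j)
  · rintro rfl; exact ⟨h, fun j _ => rfl⟩

lemma Lset_update_of_lt {r m : ℕ} {l : Fin (r + 1)} (hl : (l : ℕ) < r)
    (α : Fin m → Fin (r + 1)) (i : Fin m) :
    Lset r m (Function.update α i l)
      = (Lset r m (Function.update α i (Fin.last r))).filter fun μ => μ i = l := by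
  ext μ
  simp only [Finset.mem_filter, mem_Lset]
  constructor
  · rintro ⟨h1, h2⟩
    have hμi : μ i = l := by
      have := h2 i (by simpa using hl)
      simpa using this
    refine ⟨⟨h1, fun j hj => ?_⟩, hμi⟩
    by_cases hji : j = i
    · subst hji
      simp [Fin.last] at hj
    · rw [Function.update_of_ne hji] at hj
      have := h2 j (by rwa [Function.update_of_ne hji])
      rw [Function.update_of_ne hji] at this ⊢
      exact this
  · rintro ⟨⟨h1, h2⟩, h3⟩
    refine ⟨h1, fun j hj => ?_⟩
    by_cases hji : j = i
    · subst hji; simpa using h3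
    · rw [Function.update_of_ne hji] at hj
      have := h2 j (by rwa [Function.update_of_ne hji])
      rw [Function.update_of_ne hji] at this ⊢
      exact this

/-- Key identity: summing the `L`-set sums along a line gives zero (char 2). -/
lemma sum_sum_Lset_update {r m : ℕ} (x : (Fin m → Fin (r + 1)) → ZMod 2)
    (α : Fin m → Fin (r + 1)) (i : Fin m) :
    ∑ l : Fin (r + 1), ∑ μ ∈ Lset r m (Function.update α i l), x μ = 0 := by
  set S := Lset r m (Function.update α i (Fin.last r)) with hS
  have hfib : ∑ l : Fin (r + 1), ∑ μ ∈ S.filter (fun μ => μ i = l), x μ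
      = ∑ μ ∈ S, x μ := Finset.sum_fiberwise S (fun μ => μ i) x
  have hlast : S.filter (fun μ => μ i = Fin.last r) = ∅ := by
    rw [Finset.filter_eq_empty_iff]
    intro μ hμ
    have := (mem_Lset.mp hμ).1 i
    intro h
    rw [h] at this
    simp [Fin.last] at this
  have hsplit : ∀ l : Fin (r + 1),
      ∑ μ ∈ Lset r m (Function.update α i l), x μ
        = ∑ μ ∈ S.filter (fun μ => μ i = l), x μ + (if l = Fin.last r then ∑ μ ∈ S, x μ else 0) := by
    intro l
    by_cases hl : (l : ℕ) < r
    · have hne : l ≠ Fin.last r := by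
        intro h; rw [h] at hl; simp [Fin.last] at hl
      rw [Lset_update_of_lt hl, if_neg hne, add_zero, hS]
    · have : l = Fin.last r := by
        apply Fin.ext; simp [Fin.last]; omega
      subst this
      rw [if_pos rfl, hlast, Finset.sum_empty, zero_add, hS]
  calc ∑ l : Fin (r + 1), ∑ μ ∈ Lset r m (Function.update α i l), x μ
      = ∑ l : Fin (r + 1), (∑ μ ∈ S.filter (fun μ => μ i = l), x μ
          + (if l = Fin.last r then ∑ μ ∈ S, x μ else 0)) :=
        Finset.sum_congr rfl fun l _ => hsplit l
    _ = (∑ μ ∈ S, x μ) + ∑ μ ∈ S, x μ := by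
        rw [Finset.sum_add_distrib, hfib, Finset.sum_ite_eq' Finset.univ (Fin.last r)]
        simp
    _ = 0 := CharTwo.add_self_eq_zero _

lemma eq_sum_Lset_of_mem {r m : ℕ} {x : (Fin m → Fin (r + 1)) → ZMod 2}
    (hx : x ∈ codeC r m) (α : Fin m → Fin (r + 1)) :
    x α = ∑ μ ∈ Lset r m α, x μ := by
  by_cases h : ∀ j, (α j : ℕ) < r
  · rw [Lset_of_lt h, Finset.sum_singleton]
  · exact hx α h

/-- `C` is exactly the direct product of `m` copies of the `[r+1, r]`
single-parity-check code: `x ∈ C` iff the sum of `x` along every axis-parallel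
line is zero. -/
theorem mem_codeC_iff_line_sums_zero (r m : ℕ) (hr : 2 ≤ r) (hm : 1 ≤ m)
    (x : (Fin m → Fin (r + 1)) → ZMod 2) :
    x ∈ codeC r m ↔
      ∀ (i : Fin m) (α : Fin m → Fin (r + 1)),
        ∑ l : Fin (r + 1), x (Function.update α i l) = 0 := by
  constructor
  · intro hx i α
    calc ∑ l : Fin (r + 1), x (Function.update α i l)
        = ∑ l : Fin (r + 1), ∑ μ ∈ Lset r m (Function.update α i l), x μ :=
          Finset.sum_congr rfl fun l _ => eq_sum_Lset_of_mem hx _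
      _ = 0 := sum_sum_Lset_update x α i
  · intro hline
    -- strong induction on the number of coordinates equal to `r`
    have key : ∀ n : ℕ, ∀ α : Fin m → Fin (r + 1),
        (Finset.univ.filter fun j => ¬((α j : ℕ) < r)).card ≤ n →
        x α = ∑ μ ∈ Lset r m α, x μ := by
      intro n
      induction n with
      | zero =>
        intro α hα
        have hall : ∀ j, (α j : ℕ) < r := by
          intro j
          by_contra hj
          have : j ∈ Finset.univ.filter fun j => ¬((α j : ℕ) < r) := by
            simp only [Finset.mem_filter, Finset.mem_univ, true_and]; exact hj
          have := Finset.card_pos.mpr ⟨j, this⟩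
          omega
        rw [Lset_of_lt hall, Finset.sum_singleton]
      | succ n ih =>
        intro α hα
        by_cases hall : ∀ j, (α j : ℕ) < r
        · rw [Lset_of_lt hall, Finset.sum_singleton]
        · push_neg at hall
          obtain ⟨i, hi⟩ := hall
          have hαi : α i = Fin.last r := by
            apply Fin.ext; have := (α i).isLt; simp [Fin.last]; omega
          have hαfix : Function.update α i (Fin.last r) = α := by
            funext j
            by_cases hji : j = i
            · subst hji; simp [hαi]
            · rw [Function.update_of_ne hji]
          -- each update with value < r decreases the measure
          have hmeas : ∀ l : Fin (r + 1), (l : ℕ) < r →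
              (Finset.univ.filter fun j => ¬(((Function.update α i l) j : ℕ) < r)).card ≤ n := by
            intro l hl
            have hsub : (Finset.univ.filter fun j => ¬(((Function.update α i l) j : ℕ) < r))
                ⊆ (Finset.univ.filter fun j => ¬((α j : ℕ) < r)).erase i := by
              intro j hj
              simp only [Finset.mem_filter, Finset.mem_univ, true_and] at hj
              rw [Finset.mem_erase]
              by_cases hji : j = i
              · subst hji; rw [Function.update_self] at hj; omega
              · rw [Function.update_of_ne hji] at hj
                exact ⟨hji, by
                  simp only [Finset.mem_filter, Finset.mem_univ, true_and]; exact hj⟩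
            have hcard := Finset.card_le_card hsub
            have hmem : i ∈ Finset.univ.filter fun j => ¬((α j : ℕ) < r) := by simp; omega
            have := Finset.card_erase_of_mem hmem
            omega
          -- line sum at α in direction i
          have hls := hline i α
          rw [Fin.sum_univ_castSucc, hαfix] at hls
          have hxα : x α = ∑ l : Fin r, x (Function.update α i l.castSucc) := by
            have := CharTwo.add_self_eq_zero (R := ZMod 2) (x α)
            calc x α = (∑ l : Fin r, x (Function.update α i (Fin.castSucc l)) + x α) + x α := by
                  rw [hls, zero_add]
              _ = ∑ l : Fin r, x (Function.update α i l.castSucc) := by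
                  rw [add_assoc, this, add_zero]
          rw [hxα]
          have hstep : ∀ l : Fin r, x (Function.update α i l.castSucc)
              = ∑ μ ∈ Lset r m (Function.update α i l.castSucc), x μ := by
            intro l
            exact ih _ (hmeas _ (by simp))
          calc ∑ l : Fin r, x (Function.update α i l.castSucc)
              = ∑ l : Fin r, ∑ μ ∈ Lset r m (Function.update α i l.castSucc), x μ :=
                Finset.sum_congr rfl fun l _ => hstep l
            _ = ∑ μ ∈ Lset r m α, x μ := by
                have hK := sum_sum_Lset_update x α i
                rw [Fin.sum_univ_castSucc, hαfix] at hK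
                have h2 := CharTwo.add_self_eq_zero (R := ZMod 2) (∑ μ ∈ Lset r m α, x μ)
                calc ∑ l : Fin r, ∑ μ ∈ Lset r m (Function.update α i l.castSucc), x μ
                    = (∑ l : Fin r, ∑ μ ∈ Lset r m (Function.update α i l.castSucc), x μ
                        + ∑ μ ∈ Lset r m α, x μ) + ∑ μ ∈ Lset r m α, x μ := by
                      rw [add_assoc, h2, add_zero]
                  _ = ∑ μ ∈ Lset r m α, x μ := by rw [hK, zero_add]
    intro α hα
    exact key _ α le_rfl
end

section
/- For all integers r ≥ 2 and m ≥ 2, the rate of the constructed code strictly exceeds the rate bound r/(r+t) for codes with all-symbol locality (r,t+1) and for codes with (r,t)-cooperative locality at erasure tolerance t = 2^m - 1: that is, r^m / (r+1)^m > r / (r + 2^m - 1), equivalently r^m · (r + 2^m - 1) > r · (r+1)^m. -/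
private lemma key_aux (r : ℕ) (hr : 2 ≤ r) :
    ∀ n : ℕ, (r + 1) ^ (n + 2) ≤ r ^ (n + 2) + 2 * (2 ^ (n + 1) - 1) * r ^ (n + 1) + 1 := by
  intro n
  induction n with
  | zero => ring_nf; nlinarith
  | succ n ih =>
    have ha : 1 ≤ 2 ^ (n + 1) := Nat.one_le_two_pow
    have ha2 : 2 ^ (n + 2) - 1 = 2 * (2 ^ (n + 1) - 1) + 1 := by
      have : 2 ^ (n + 2) = 2 * 2 ^ (n + 1) := by ring
      omega
    set a := 2 ^ (n + 1) - 1 with hadef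
    have hrp : 1 ≤ r ^ (n + 1) := Nat.one_le_pow _ _ (by omega)
    have hpow : r ^ (n + 2) = r * r ^ (n + 1) := by ring
    calc (r + 1) ^ (n + 3) = (r + 1) ^ (n + 2) * (r + 1) := by ring
      _ ≤ (r ^ (n + 2) + 2 * a * r ^ (n + 1) + 1) * (r + 1) :=
          Nat.mul_le_mul_right _ ih
      _ ≤ r ^ (n + 3) + 2 * (2 * a + 1) * r ^ (n + 2) + 1 := by
          have h1 : 2 * a * r ^ (n + 1) ≤ 2 * a * r ^ (n + 2) := by
            apply Nat.mul_le_mul_left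
            rw [hpow]; nlinarith
          have h2 : r ≤ r ^ (n + 2) := by rw [hpow]; nlinarith
          have h3 : r ^ (n + 3) = r * r ^ (n + 2) := by ring
          nlinarith
      _ = r ^ (n + 3) + 2 * (2 ^ (n + 2) - 1) * r ^ (n + 2) + 1 := by rw [ha2]

private lemma key_nat (r m : ℕ) (hr : 2 ≤ r) (hm : 2 ≤ m) :
    r * (r + 1) ^ m < r ^ m * (r + 2 ^ m - 1) := by
  obtain ⟨n, rfl⟩ : ∃ n, m = n + 2 := ⟨m - 2, by omega⟩
  have h := key_aux r hr n
  have ha : 1 ≤ 2 ^ (n + 1) := Nat.one_le_two_pow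
  have hrp : 2 ≤ r ^ (n + 1) := le_trans hr (Nat.le_self_pow (by omega) r)
  have hs : r + 2 ^ (n + 2) - 1 = r + (2 * (2 ^ (n + 1) - 1) + 1) := by
    have : 2 ^ (n + 2) = 2 * 2 ^ (n + 1) := by ring
    omega
  rw [hs]
  have hlt : (r + 1) ^ (n + 2) < r ^ (n + 2) + 2 * (2 ^ (n + 1) - 1) * r ^ (n + 1) + r ^ (n + 1) := by
    omega
  calc r * (r + 1) ^ (n + 2)
      < r * (r ^ (n + 2) + 2 * (2 ^ (n + 1) - 1) * r ^ (n + 1) + r ^ (n + 1)) :=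
        Nat.mul_lt_mul_of_le_of_lt (le_refl r) hlt (by omega)
    _ = r ^ (n + 2) * (r + (2 * (2 ^ (n + 1) - 1) + 1)) := by ring

/-- For `r ≥ 2` and `m ≥ 2`, the rate `r^m/(r+1)^m` of the product code
strictly exceeds the bound `r/(r+t)` with `t = 2^m - 1`; equivalently
`r^m (r + 2^m - 1) > r (r+1)^m`. -/
theorem product_code_rate_exceeds_bound (r m : ℕ) (hr : 2 ≤ r) (hm : 2 ≤ m) :
    ((r : ℚ) ^ m / ((r : ℚ) + 1) ^ m > (r : ℚ) / ((r : ℚ) + 2 ^ m - 1)) ∧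
    r ^ m * (r + 2 ^ m - 1) > r * (r + 1) ^ m := by
  have hnat := key_nat r m hr hm
  refine ⟨?_, hnat⟩
  have h1 : (0 : ℚ) < ((r : ℚ) + 1) ^ m := by positivity
  have h2 : (0 : ℚ) < (r : ℚ) + 2 ^ m - 1 := by
    have : (2 : ℚ) ≤ (r : ℚ) := by exact_mod_cast hr
    have : (1 : ℚ) ≤ 2 ^ m := one_le_pow₀ (by norm_num)
    linarith
  rw [gt_iff_lt, div_lt_div_iff₀ h2 h1]
  have hcast : ((r * (r + 1) ^ m : ℕ) : ℚ) < ((r ^ m * (r + 2 ^ m - 1) : ℕ) : ℚ) := by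
    exact_mod_cast hnat
  have h2m : (1 : ℕ) ≤ 2 ^ m := Nat.one_le_two_pow
  push_cast [Nat.cast_sub (by omega : 1 ≤ r + 2 ^ m)] at hcast
  linarith [hcast]
end
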